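/- There exist constants c₁, c₂, c₃ > 0 such that for all integers n > 1, σ with 2 ≤ σ ≤ n, and z with σ ≤ z ≤ n/log_σ n, there is a string s of length n over an alphabet of size σ whose LZ parsing size Zov satisfies c₁·z ≤ Zov ≤ c₂·z and whose novLZ parsing size Znon satisfies Znon ≥ c₃ · z · log₂(n / (z · log_σ z)). -/

import Mathlib

attribute [local instance] Classical.propDecidable

/-- `PermOv s i ℓ` : the substring of `s` of length `ℓ` starting at 0-indexed position `i`
has an occurrence starting at some earlier position `j < i` (possibly overlapping it). -/
def PermOv {α : Type*} (s : List α) (i ℓ : ℕ) : Prop :=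
  ∃ j < i, (s.drop j).take ℓ = (s.drop i).take ℓ

/-- `PermNov s i ℓ` : the substring of `s` of length `ℓ` starting at 0-indexed position `i`
has an occurrence starting at some position `j` with `j + ℓ ≤ i` (not overlapping it). -/
def PermNov {α : Type*} (s : List α) (i ℓ : ℕ) : Prop :=
  ∃ j, j + ℓ ≤ i ∧ (s.drop j).take ℓ = (s.drop i).take ℓ

/-- `PermOv3 s i ℓ` : the substring of `s` of length `ℓ - 1` starting at 0-indexed position `i`
(i.e. the phrase of length `ℓ` starting at `i` minus its last letter) has an occurrence
starting at some earlier position `j < i` (possibly overlapping). -/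
def PermOv3 {α : Type*} (s : List α) (i ℓ : ℕ) : Prop :=
  ∃ j < i, (s.drop j).take (ℓ - 1) = (s.drop i).take (ℓ - 1)

/-- `PermNov3 s i ℓ` : the substring of `s` of length `ℓ - 1` starting at 0-indexed position `i`
has an occurrence starting at some position `j` with `j + (ℓ - 1) ≤ i` (so this occurrence
ends before position `i`). -/
def PermNov3 {α : Type*} (s : List α) (i ℓ : ℕ) : Prop :=
  ∃ j, j + (ℓ - 1) ≤ i ∧ (s.drop j).take (ℓ - 1) = (s.drop i).take (ℓ - 1)

/-- Length of the greedy phrase starting at 0-indexed position `i`: the largest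
`ℓ ≤ |s| - i` permitted by `P`, or `1` (a single letter) if no length is permitted. -/
noncomputable def phraseLen {α : Type*} (P : List α → ℕ → ℕ → Prop) (s : List α) (i : ℕ) : ℕ :=
  max 1 (Nat.findGreatest (fun ℓ => P s i ℓ) (s.length - i))

/-- The list of phrases of the greedy parsing (w.r.t. the permission predicate `P`)
of the suffix of `s` starting at 0-indexed position `i`. -/
noncomputable def phrasesFrom {α : Type*} (P : List α → ℕ → ℕ → Prop) (s : List α) (i : ℕ) :
    List (List α) :=
  if _h : i < s.length then
    (s.drop i).take (phraseLen P s i) :: phrasesFrom P s (i + phraseLen P s i)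
  else []
  termination_by s.length - i
  decreasing_by
    have h1 : 1 ≤ phraseLen P s i := by unfold phraseLen; exact Nat.le_max_left _ _
    omega

/-- The LZ parsing of `s` (phrases may overlap their earlier occurrences). -/
noncomputable def lzPhrases {α : Type*} (s : List α) : List (List α) := phrasesFrom PermOv s 0
/-- The novLZ parsing of `s` (earlier occurrences may not overlap the phrases). -/
noncomputable def novlzPhrases {α : Type*} (s : List α) : List (List α) := phrasesFrom PermNov s 0
/-- The LZ3 parsing of `s`. -/
noncomputable def lz3Phrases {α : Type*} (s : List α) : List (List α) := phrasesFrom PermOv3 s 0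
/-- The novLZ3 parsing of `s`. -/
noncomputable def novlz3Phrases {α : Type*} (s : List α) : List (List α) := phrasesFrom PermNov3 s 0

/-- `Zov`: the size (number of phrases) of the LZ parsing of `s`. -/
noncomputable def zOv {α : Type*} (s : List α) : ℕ := (lzPhrases s).length
/-- `Znon`: the size of the novLZ parsing of `s`. -/
noncomputable def zNov {α : Type*} (s : List α) : ℕ := (novlzPhrases s).length
/-- `Zov₃`: the size of the LZ3 parsing of `s`. -/
noncomputable def zOv3 {α : Type*} (s : List α) : ℕ := (lz3Phrases s).length
/-- `Znon₃`: the size of the novLZ3 parsing of `s`. -/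
noncomputable def zNov3 {α : Type*} (s : List α) : ℕ := (novlz3Phrases s).length

/-- `ts` is an LZ-type parsing of `s`: a decomposition of `s` into nonempty strings such that
each `tᵢ` is a single letter or occurs in `s[1..|t₁⋯tᵢ|-1]`. -/
def IsLZTypeParsing {α : Type*} (s : List α) (ts : List (List α)) : Prop :=
  ts.flatten = s ∧ (∀ t ∈ ts, t ≠ []) ∧
    ∀ i (h : i < ts.length),
      ts[i].length = 1 ∨ ts[i] <:+: s.take ((ts.take (i + 1)).flatten.length - 1)

/-- `ts` is a novLZ-type parsing of `s`: a decomposition of `s` into nonempty strings such that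
each `tᵢ` is a single letter or occurs in `t₁⋯tᵢ₋₁`. -/
def IsNovLZTypeParsing {α : Type*} (s : List α) (ts : List (List α)) : Prop :=
  ts.flatten = s ∧ (∀ t ∈ ts, t ≠ []) ∧
    ∀ i (h : i < ts.length),
      ts[i].length = 1 ∨ ts[i] <:+: (ts.take i).flatten

/-- `ts` is an LZ3-type parsing of `s`: a decomposition of `s` into nonempty strings such that
each `tᵢ` minus its last letter occurs in `s[1..|t₁⋯tᵢ|-2]`. -/
def IsLZ3TypeParsing {α : Type*} (s : List α) (ts : List (List α)) : Prop :=
  ts.flatten = s ∧ (∀ t ∈ ts, t ≠ []) ∧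
    ∀ i (h : i < ts.length),
      ts[i].dropLast <:+: s.take ((ts.take (i + 1)).flatten.length - 2)

/-- `ts` is a novLZ3-type parsing of `s`: a decomposition of `s` into nonempty strings such that
each `tᵢ` minus its last letter occurs in `t₁⋯tᵢ₋₁`. -/
def IsNovLZ3TypeParsing {α : Type*} (s : List α) (ts : List (List α)) : Prop :=
  ts.flatten = s ∧ (∀ t ∈ ts, t ≠ []) ∧
    ∀ i (h : i < ts.length),
      ts[i].dropLast <:+: (ts.take i).flatten

namespace ZNLaux

variable {α : Type*}

theorem pl_one_le (P : List α → ℕ → ℕ → Prop) (s : List α) (i : ℕ) : 1 ≤ phraseLen P s i :=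
  le_max_left _ _

theorem pl_add_le (P : List α → ℕ → ℕ → Prop) (s : List α) {i : ℕ} (h : i < s.length) :
    i + phraseLen P s i ≤ s.length := by
  have h2 := Nat.findGreatest_le (P := fun ℓ => P s i ℓ) (s.length - i)
  unfold phraseLen
  omega

theorem le_pl (P : List α → ℕ → ℕ → Prop) (s : List α) {i ℓ : ℕ} (h2 : i + ℓ ≤ s.length)
    (h : P s i ℓ) : ℓ ≤ phraseLen P s i :=
  le_trans (Nat.le_findGreatest (by omega) h) (le_max_right _ _)

theorem pl_spec (P : List α → ℕ → ℕ → Prop) (s : List α) {i : ℕ}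
    (h : 2 ≤ phraseLen P s i) : P s i (phraseLen P s i) := by
  unfold phraseLen at h ⊢
  have hfg : 2 ≤ Nat.findGreatest (fun ℓ => P s i ℓ) (s.length - i) := by omega
  have hplfg : max 1 (Nat.findGreatest (fun ℓ => P s i ℓ) (s.length - i))
      = Nat.findGreatest (fun ℓ => P s i ℓ) (s.length - i) := by omega
  have hne : Nat.findGreatest (fun ℓ => P s i ℓ) (s.length - i) ≠ 0 := by omega
  rw [Ne, Nat.findGreatest_eq_zero_iff] at hne
  push_neg at hne
  obtain ⟨w, hw0, hwb, hwP⟩ := hne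
  rw [hplfg]
  exact Nat.findGreatest_spec hwb hwP

noncomputable def glen (P : List α → ℕ → ℕ → Prop) (s : List α) (g : ℕ) : ℕ :=
  (phrasesFrom P s g).length

theorem glen_lt (P : List α → ℕ → ℕ → Prop) (s : List α) {g : ℕ} (h : g < s.length) :
    glen P s g = 1 + glen P s (g + phraseLen P s g) := by
  unfold glen
  rw [phrasesFrom]
  simp [h, Nat.add_comm]

theorem glen_ge (P : List α → ℕ → ℕ → Prop) (s : List α) {g : ℕ} (h : ¬ g < s.length) :
    glen P s g = 0 := by
  unfold glen; rw [phrasesFrom]; simp [h]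

theorem one_le_glen (P : List α → ℕ → ℕ → Prop) (s : List α) {g : ℕ} (h : g < s.length) :
    1 ≤ glen P s g := by rw [glen_lt P s h]; omega

theorem glen_le_sub (P : List α → ℕ → ℕ → Prop) (s : List α) : ∀ g, glen P s g ≤ s.length - g := by
  have H : ∀ d g, s.length - g ≤ d → glen P s g ≤ s.length - g := by
    intro d
    induction d with
    | zero =>
      intro g h
      have hng : ¬ g < s.length := by omega
      rw [glen_ge P s hng]
      omega
    | succ d ih =>
      intro g h
      by_cases hlt : g < s.length
      · rw [glen_lt P s hlt]
        have h1 := pl_one_le P s g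
        have h2 := pl_add_le P s hlt
        have h3 := ih (g + phraseLen P s g) (by omega)
        omega
      · rw [glen_ge P s hlt]; omega
  intro g
  exact H _ g le_rfl

/-- `OkL P s a L` : the list of phrase lengths `L`, laid out starting at position `a`,
consists of valid phrases. -/
def OkL (P : List α → ℕ → ℕ → Prop) (s : List α) : ℕ → List ℕ → Prop
  | _, [] => True
  | a, ℓ :: L => (ℓ = 1 ∨ P s a ℓ) ∧ OkL P s (a + ℓ) L

theorem okL_append {P : List α → ℕ → ℕ → Prop} {s : List α} :
    ∀ (L1 : List ℕ) (a : ℕ) (L2 : List ℕ), OkL P s a L1 → OkL P s (a + L1.sum) L2 →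
      OkL P s a (L1 ++ L2) := by
  intro L1
  induction L1 with
  | nil => intro a L2 _ h2; simpa using h2
  | cons ℓ L ih =>
    intro a L2 h1 h2
    refine ⟨h1.1, ih (a + ℓ) L2 h1.2 ?_⟩
    have : a + ℓ + L.sum = a + (ℓ :: L).sum := by simp; ring
    rw [this]; exact h2

theorem permOv_shift {s : List α} {a ℓ g : ℕ} (h : PermOv s a ℓ) (h1 : a ≤ g)
    (h2 : g < a + ℓ) : PermOv s g (a + ℓ - g) := by
  obtain ⟨j, hj, hseg⟩ := h
  refine ⟨j + (g - a), by omega, ?_⟩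
  have h3 := congrArg (List.drop (g - a)) hseg
  rw [List.drop_take, List.drop_take, List.drop_drop, List.drop_drop] at h3
  have e1 : a + (g - a) = g := by omega
  have e2 : ℓ - (g - a) = a + ℓ - g := by omega
  rw [e1, e2] at h3
  exact h3

/-- Greedy optimality for the overlapping LZ parsing. -/
theorem glen_le_okL {s : List α} :
    ∀ (L : List ℕ) (a g : ℕ), OkL PermOv s a L → a + L.sum = s.length → a ≤ g →
      glen PermOv s g ≤ L.length := by
  intro L
  induction L with
  | nil =>
    intro a g _ hsum hag
    have : ¬ g < s.length := by simp at hsum; omega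
    rw [glen_ge _ _ this]
    simp
  | cons ℓ L ih =>
    intro a g hok hsum hag
    simp only [List.sum_cons] at hsum
    by_cases hg : a + ℓ ≤ g
    · have := ih (a + ℓ) g hok.2 (by omega) hg
      simpa using Nat.le_succ_of_le this
    · push_neg at hg
      have hgn : g < s.length := by have := L.sum.zero_le; omega
      rw [glen_lt _ _ hgn]
      have hpl : a + ℓ - g ≤ phraseLen PermOv s g := by
        rcases hok.1 with h1 | hP'
        · have := pl_one_le PermOv s g; omega
        · exact le_pl _ _ (by omega) (permOv_shift hP' hag hg)
      have h2 := ih (a + ℓ) (g + phraseLen PermOv s g) hok.2 (by omega) (by omega)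
      rw [List.length_cons]
      omega

end ZNLaux
namespace ZNLaux

/-- the `c`-th digit (most significant first) of `x` in base `σ`, out of `m` digits. -/
def dgt (σ m x c : ℕ) : ℕ := x / σ ^ (m - 1 - c) % σ

/-- the `j`-th character of the word associated to `x` :
`0 0 (1 d₀) (1 d₁) ⋯ (1 d_{m-1}) 1` where `d₀ ⋯ d_{m-1}` are the digits of `x`. -/
def Wf (σ m x j : ℕ) : ℕ :=
  if j < 2 then 0 else if j = 2*m+2 then 1 else if j % 2 = 0 then 1 else dgt σ m x ((j-3)/2)

/-- the block (index of word) to which the `i`-th period belongs: `k` periods per block,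
blocks `0, …, q-1`, the last block absorbing everything beyond. -/
def blkf (q k i : ℕ) : ℕ := min (i / k) (q - 1)

/-- the character of the constructed string at position `v` (as a natural number). -/
def ff (σ m q k v : ℕ) : ℕ := Wf σ m (blkf q k (v / (2*m+3))) (v % (2*m+3))

theorem Wf_lt {σ : ℕ} (hσ : 2 ≤ σ) (m x j : ℕ) : Wf σ m x j < σ := by
  unfold Wf dgt
  split_ifs
  · omega
  · omega
  · omega
  · exact Nat.lt_of_lt_of_le (Nat.mod_lt _ (by omega)) le_rfl

theorem ff_lt {σ : ℕ} (hσ : 2 ≤ σ) (m q k v : ℕ) : ff σ m q k v < σ := Wf_lt hσ _ _ _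

/-- The constructed string, of length `n`, over `Fin σ`. -/
def sf (σ m q k n : ℕ) (hσ : 2 ≤ σ) : List (Fin σ) :=
  List.ofFn fun i : Fin n => ⟨ff σ m q k i, ff_lt hσ m q k i⟩

theorem sf_length (σ m q k n : ℕ) (hσ : 2 ≤ σ) : (sf σ m q k n hσ).length = n :=
  List.length_ofFn

theorem sf_getElem (σ m q k n : ℕ) (hσ : 2 ≤ σ) {v : ℕ} (h : v < (sf σ m q k n hσ).length) :
    (sf σ m q k n hσ)[v] = ⟨ff σ m q k v, ff_lt hσ m q k v⟩ := by
  simp [sf]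

theorem Wf_zero {σ m x j : ℕ} (h : j < 2) : Wf σ m x j = 0 := by unfold Wf; simp [h]

theorem Wf_term {σ m x : ℕ} : Wf σ m x (2*m+2) = 1 := by
  unfold Wf; split_ifs <;> omega

theorem Wf_even {σ m x j : ℕ} (h2 : 2 ≤ j) (he : j % 2 = 0) (hne : j ≠ 2*m+2) :
    Wf σ m x j = 1 := by
  unfold Wf; split_ifs <;> omega

theorem Wf_digit {σ m x : ℕ} (c : ℕ) : Wf σ m x (2*c+3) = dgt σ m x c := by
  unfold Wf
  have h1 : ¬ (2*c+3 < 2) := by omega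
  have h2 : 2*c+3 ≠ 2*m+2 := by omega
  have h3 : ¬ ((2*c+3) % 2 = 0) := by omega
  rw [if_neg h1, if_neg h2, if_neg h3]
  congr 1
  omega

theorem ff_align {σ m q k : ℕ} {i j : ℕ} (hj : j < 2*m+3) :
    ff σ m q k (i*(2*m+3) + j) = Wf σ m (blkf q k i) j := by
  unfold ff
  have he : i*(2*m+3) + j = (2*m+3)*i + j := by ring_nf
  have hd : (i*(2*m+3) + j) / (2*m+3) = i := by
    rw [he, Nat.mul_add_div (by omega : 0 < 2*m+3), Nat.div_eq_of_lt hj]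
    omega
  have hm : (i*(2*m+3) + j) % (2*m+3) = j := by
    rw [he, Nat.mul_add_mod, Nat.mod_eq_of_lt hj]
  rw [hd, hm]

theorem blk_in {q k x i : ℕ} (hx : x < q) (h1 : x*k ≤ i) (h2 : i < x*k + k) :
    blkf q k i = x := by
  unfold blkf
  have hk : 0 < k := by omega
  have hd : i / k = x := Nat.div_eq_of_lt_le (by omega) (by
    have : (x+1) * k = x * k + k := by ring
    omega)
  rw [hd]
  omega

theorem blk_ge {q k i : ℕ} (hk : 0 < k) (h1 : (q-1)*k ≤ i) : blkf q k i = q - 1 := by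
  unfold blkf
  have h5 : q - 1 ≤ i / k := by
    rw [Nat.le_div_iff_mul_le hk]
    omega
  omega

theorem blk_lt {q k i : ℕ} (hq : 1 ≤ q) : blkf q k i < q := by
  unfold blkf; omega

/-- two consecutive zeros in the string occur only at the start of a period. -/
theorem ff_pair_zero {σ m q k v : ℕ} (h0 : ff σ m q k v = 0) (h1 : ff σ m q k (v+1) = 0) :
    v % (2*m+3) = 0 := by
  set p := 2*m+3 with hp
  have hp3 : 3 ≤ p := by omega
  have hj : v % p < p := Nat.mod_lt _ (by omega)
  set j := v % p with hjd
  by_contra hne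
  have hj1 : 1 ≤ j := by omega
  -- case j = p - 1 : the character at v is the terminator 1
  by_cases hlast : j = 2*m+2
  · unfold ff at h0
    rw [← hjd, hlast, Wf_term] at h0
    omega
  · -- v+1 is in the same period
    have hjlt : j + 1 < p := by omega
    have hv : v = (v/p) * p + j := by
      have h6 := Nat.div_add_mod v p
      have h7 : p * (v/p) = (v/p) * p := Nat.mul_comm _ _
      omega
    have h2 : ff σ m q k (v+1) = Wf σ m (blkf q k (v/p)) (j+1) := by
      have : v + 1 = (v/p) * p + (j+1) := by omega
      rw [this, ff_align (by omega)]
    have h0' : Wf σ m (blkf q k (v/p)) j = 0 := by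
      have : ff σ m q k v = Wf σ m (blkf q k (v/p)) j := by
        conv_lhs => rw [hv]
        rw [ff_align (by omega)]
      omega
    rw [h2] at h1
    -- now case on parity of j
    by_cases hpar : j % 2 = 0
    · -- j even, 2 ≤ j (since j ≥ 1 and even), j ≠ 2m+2 : char is 1
      have : Wf σ m (blkf q k (v/p)) j = 1 := Wf_even (by omega) hpar hlast
      omega
    · -- j odd; then j+1 even; j+1 = 2m+2 or even marker, both give 1
      by_cases hlast2 : j + 1 = 2*m+2
      · rw [show j+1 = 2*m+2 from hlast2, Wf_term] at h1
        omega
      · have : Wf σ m (blkf q k (v/p)) (j+1) = 1 := Wf_even (by omega) (by omega) hlast2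
        omega

end ZNLaux
namespace ZNLaux

theorem digits_inj_aux {σ : ℕ} (hσ : 2 ≤ σ) : ∀ m x y, x < σ^m → y < σ^m →
    (∀ e < m, x / σ^e % σ = y / σ^e % σ) → x = y := by
  intro m
  induction m with
  | zero => intro x y hx hy _; simp only [pow_zero] at hx hy; omega
  | succ m ih =>
    intro x y hx hy h
    have h0 := h 0 (by omega)
    simp only [pow_zero, Nat.div_one] at h0
    have hd : x / σ = y / σ := by
      apply ih (x/σ) (y/σ)
      · rw [Nat.div_lt_iff_lt_mul (by omega : 0 < σ)]
        calc x < σ^(m+1) := hx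
        _ = σ^m * σ := by rw [pow_succ]
      · rw [Nat.div_lt_iff_lt_mul (by omega : 0 < σ)]
        calc y < σ^(m+1) := hy
        _ = σ^m * σ := by rw [pow_succ]
      · intro e he
        have h1 := h (e+1) (by omega)
        have h2 : ∀ w : ℕ, w / σ^(e+1) = w / σ / σ^e := by
          intro w
          rw [Nat.div_div_eq_div_mul, ← pow_succ']
        rw [h2 x, h2 y] at h1
        exact h1
    have e1 := Nat.div_add_mod x σ
    have e2 := Nat.div_add_mod y σ
    rw [hd] at e1
    omega

theorem dgt_inj {σ m x y : ℕ} (hσ : 2 ≤ σ) (hx : x < σ^m) (hy : y < σ^m)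
    (h : ∀ c < m, dgt σ m x c = dgt σ m y c) : x = y := by
  apply digits_inj_aux hσ m x y hx hy
  intro e he
  have := h (m - 1 - e) (by omega)
  unfold dgt at this
  rwa [show m - 1 - (m - 1 - e) = e from by omega] at this

/-- number of trailing zero digits of `x` (in base `σ`). -/
def trl (σ m x : ℕ) : ℕ := Nat.findGreatest (fun e => σ^e ∣ x) m

theorem trl_dvd (σ m x : ℕ) : σ^(trl σ m x) ∣ x :=
  Nat.findGreatest_spec (P := fun e => σ^e ∣ x) (m := 0) (by omega) (by simp)

theorem trl_le (σ m x : ℕ) : trl σ m x ≤ m := Nat.findGreatest_le m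

theorem trl_lt {σ m x : ℕ} (hx1 : 1 ≤ x) (hxm : x < σ^m) : trl σ m x < m := by
  have h1 := trl_le σ m x
  rcases Nat.lt_or_ge (trl σ m x) m with h | h
  · exact h
  · exfalso
    have h2 : trl σ m x = m := by omega
    have h3 := trl_dvd σ m x
    rw [h2] at h3
    have := Nat.le_of_dvd (by omega) h3
    omega

theorem trl_not_dvd {σ m x : ℕ} (hx1 : 1 ≤ x) (hxm : x < σ^m) :
    ¬ σ^(trl σ m x + 1) ∣ x :=
  Nat.findGreatest_is_greatest (P := fun e => σ^e ∣ x) (k := trl σ m x + 1)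
    (Nat.lt_succ_self _) (by have := trl_lt hx1 hxm; omega)

theorem pred_div_eq {d x : ℕ} (hd : 0 < d) (h : ¬ d ∣ x) (hx : 1 ≤ x) :
    (x-1)/d = x/d := by
  have h1 : x % d ≠ 0 := fun h2 => h (Nat.dvd_of_mod_eq_zero h2)
  have h2 := Nat.div_add_mod x d
  have h2' : x % d < d := Nat.mod_lt _ hd
  have h3 : (x-1) = d*(x/d) + (x%d - 1) := by omega
  rw [h3, Nat.mul_add_div hd]
  have h4 : (x % d - 1)/d = 0 := Nat.div_eq_of_lt (by omega)
  rw [h4]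
  omega

theorem div_pred_eq {σ m x : ℕ} (hσ : 2 ≤ σ) (hx1 : 1 ≤ x) (hxm : x < σ^m) {e : ℕ}
    (he : trl σ m x < e) : x / σ^e = (x-1)/σ^e := by
  have hsplit : σ^e = σ^(trl σ m x + 1) * σ^(e - (trl σ m x + 1)) := by
    rw [← pow_add]
    congr 1
    omega
  rw [hsplit, ← Nat.div_div_eq_div_mul, ← Nat.div_div_eq_div_mul,
    pred_div_eq (by positivity) (trl_not_dvd hx1 hxm) hx1]

theorem dgt_pred {σ m x : ℕ} (hσ : 2 ≤ σ) (hx1 : 1 ≤ x) (hxm : x < σ^m) {c : ℕ}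
    (hc : c + trl σ m x + 2 ≤ m) : dgt σ m x c = dgt σ m (x-1) c := by
  unfold dgt
  rw [← div_pred_eq hσ hx1 hxm (by omega)]

theorem dgt_trail_zero {σ m x : ℕ} (hσ : 2 ≤ σ) {c : ℕ} (hc2 : m - 1 - c < trl σ m x) :
    dgt σ m x c = 0 := by
  unfold dgt
  set e := m - 1 - c with hed
  have hdvd : σ^(e+1) ∣ x := dvd_trans (pow_dvd_pow σ (by omega)) (trl_dvd σ m x)
  obtain ⟨w, hw⟩ := hdvd
  rw [hw, pow_succ, Nat.mul_assoc, Nat.mul_div_cancel_left _ (by positivity), Nat.mul_mod_right]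

end ZNLaux
namespace ZNLaux

theorem seg_ff_of_eq {σ m q k n : ℕ} {hσ : 2 ≤ σ} {u v ℓ : ℕ} (hu : u + ℓ ≤ n)
    (h : ((sf σ m q k n hσ).drop v).take ℓ = ((sf σ m q k n hσ).drop u).take ℓ) :
    ∀ t, t < ℓ → ff σ m q k (v+t) = ff σ m q k (u+t) := by
  intro t ht
  have hlen : (sf σ m q k n hσ).length = n := sf_length σ m q k n hσ
  have hlu : (((sf σ m q k n hσ).drop u).take ℓ).length = ℓ := by
    simp only [List.length_take, List.length_drop, hlen]
    omega
  have hlv : (((sf σ m q k n hσ).drop v).take ℓ).length = ℓ := by rw [h]; exact hlu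
  have hvn : v + ℓ ≤ n := by
    simp only [List.length_take, List.length_drop, hlen] at hlv
    omega
  have h1 : (((sf σ m q k n hσ).drop v).take ℓ)[t]'(by omega) =
      (((sf σ m q k n hσ).drop u).take ℓ)[t]'(by omega) := List.getElem_of_eq h _
  rw [List.getElem_take, List.getElem_take, List.getElem_drop, List.getElem_drop] at h1
  rw [sf_getElem σ m q k n hσ, sf_getElem σ m q k n hσ] at h1
  exact congrArg Fin.val h1

theorem seg_eq_of_ff {σ m q k n : ℕ} {hσ : 2 ≤ σ} {u v ℓ : ℕ} (hu : u + ℓ ≤ n) (hv : v + ℓ ≤ n)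
    (h : ∀ t, t < ℓ → ff σ m q k (v+t) = ff σ m q k (u+t)) :
    ((sf σ m q k n hσ).drop v).take ℓ = ((sf σ m q k n hσ).drop u).take ℓ := by
  have hlen : (sf σ m q k n hσ).length = n := sf_length σ m q k n hσ
  apply List.ext_getElem
  · simp only [List.length_take, List.length_drop, hlen]
    omega
  · intro t h1 h2
    rw [List.getElem_take, List.getElem_take, List.getElem_drop, List.getElem_drop,
      sf_getElem σ m q k n hσ, sf_getElem σ m q k n hσ]
    simp only [List.length_take, List.length_drop, hlen] at h1
    exact Fin.ext (h t (by omega))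

theorem fresh {σ m q k : ℕ} (hσ : 2 ≤ σ) (hk : 1 ≤ k) (hq : 1 ≤ q) (hqm : q ≤ σ^m)
    {x v : ℕ} (hx : x < q)
    (H : ∀ t, t < 2*m+5 → ff σ m q k (v+t) = ff σ m q k (x*k*(2*m+3)+t)) :
    x*k*(2*m+3) ≤ v := by
  set p := 2*m+3 with hpd
  have hbw : ∀ t, t < p → ff σ m q k (x*k*(2*m+3)+t) = Wf σ m x t := by
    intro t ht
    rw [ff_align ht, blk_in hx (le_refl _) (by omega)]
  have h0 : ff σ m q k v = 0 := by
    rw [show v = v + 0 from rfl, H 0 (by omega), hbw 0 (by omega), Wf_zero (by omega)]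
  have h1 : ff σ m q k (v+1) = 0 := by
    rw [H 1 (by omega), hbw 1 (by omega), Wf_zero (by omega)]
  have hvp : v % p = 0 := ff_pair_zero h0 h1
  have hvi : v = (v/p) * p := by
    have h6 := Nat.div_add_mod v p
    have h7 : p * (v/p) = (v/p) * p := Nat.mul_comm _ _
    omega
  have hvt : ∀ t, t < p → ff σ m q k (v + t) = Wf σ m (blkf q k (v/p)) t := by
    intro t ht
    conv_lhs => rw [hvi]
    exact ff_align ht
  have hblt : blkf q k (v/p) < q := blk_lt hq
  have hdg : ∀ c, c < m → dgt σ m (blkf q k (v/p)) c = dgt σ m x c := by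
    intro c hc
    have ht : 2*c+3 < p := by omega
    have := H (2*c+3) (by omega)
    rw [hvt _ ht, hbw _ ht, Wf_digit, Wf_digit] at this
    exact this
  have heq : blkf q k (v/p) = x :=
    dgt_inj hσ (lt_of_lt_of_le hblt hqm) (lt_of_lt_of_le hx hqm) hdg
  have hxle : x ≤ v/p / k := by
    unfold blkf at heq
    have := min_le_left (v/p/k) (q-1)
    omega
  have hxk : x * k ≤ v/p := by
    rw [Nat.le_div_iff_mul_le (by omega : 0 < k)] at hxle
    exact hxle
  calc x*k*p ≤ (v/p) * p := Nat.mul_le_mul_right _ hxk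
  _ = v := hvi.symm

end ZNLaux
namespace ZNLaux

/-- `P`-phrases of length ≥ 2 have a source strictly before them. -/
def SrcOf {α : Type*} (P : List α → ℕ → ℕ → Prop) (s : List α) : Prop :=
  ∀ u ℓ, 2 ≤ ℓ → P s u ℓ → ∃ v < u, (s.drop v).take ℓ = (s.drop u).take ℓ

theorem srcOf_permOv {α : Type*} (s : List α) : SrcOf PermOv s := fun _ _ _ h => h

theorem srcOf_permNov {α : Type*} (s : List α) : SrcOf PermNov s := by
  rintro u ℓ h2 ⟨v, hv, hseg⟩
  exact ⟨v, by omega, hseg⟩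

theorem align (p u : ℕ) (hp : 0 < p) : ∃ o i', o < p ∧ u + o = i' * p := by
  have hd := Nat.div_add_mod u p
  have hc : p * (u/p) = (u/p) * p := Nat.mul_comm _ _
  by_cases h0 : u % p = 0
  · refine ⟨0, u/p, hp, by omega⟩
  · have hm : u % p < p := Nat.mod_lt _ hp
    refine ⟨p - u % p, u/p + 1, by omega, ?_⟩
    have : (u/p + 1) * p = (u/p) * p + p := by ring
    omega

theorem marker_content {σ m q k : ℕ} (hk : 1 ≤ k) {x i t : ℕ} (hxq : x < q)
    (hb : blkf q k i = x) (ht : t < 2*m+5) :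
    ff σ m q k (i*(2*m+3)+t) = ff σ m q k (x*k*(2*m+3)+t) := by
  rcases Nat.lt_or_ge t (2*m+3) with h | h
  · rw [ff_align h, ff_align h, hb, blk_in hxq (le_refl _) (by omega)]
  · have e1 : i*(2*m+3) + t = (i+1)*(2*m+3) + (t - (2*m+3)) := by
      have : (i+1)*(2*m+3) = i*(2*m+3) + (2*m+3) := by ring
      omega
    have e2 : x*k*(2*m+3) + t = (x*k+1)*(2*m+3) + (t - (2*m+3)) := by
      have : (x*k+1)*(2*m+3) = x*k*(2*m+3) + (2*m+3) := by ring
      omega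
    rw [e1, e2, ff_align (by omega), ff_align (by omega),
      Wf_zero (by omega), Wf_zero (by omega)]

theorem no_skip {σ m q k : ℕ} (hσ : 2 ≤ σ) (hk : 1 ≤ k) (hq : 1 ≤ q) (hqm : q ≤ σ^m)
    {x u ℓ v : ℕ} (hx : x < q) (hv : v < u) (hu : u ≤ x*k*(2*m+3))
    (hl : x*k*(2*m+3) + (2*m+5) ≤ u + ℓ)
    (hff : ∀ t, t < ℓ → ff σ m q k (v+t) = ff σ m q k (u+t)) : False := by
  have H : ∀ t, t < 2*m+5 →
      ff σ m q k ((v + (x*k*(2*m+3) - u)) + t) = ff σ m q k (x*k*(2*m+3) + t) := by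
    intro t ht
    have e1 : v + (x*k*(2*m+3) - u) + t = v + ((x*k*(2*m+3) - u) + t) := by omega
    have e2 : u + ((x*k*(2*m+3) - u) + t) = x*k*(2*m+3) + t := by omega
    rw [e1, hff _ (by omega), e2]
  have := fresh hσ hk hq hqm hx H
  omega

theorem jump_bound {σ m q k n : ℕ} (hσ : 2 ≤ σ) (hk : 1 ≤ k) (hq : 1 ≤ q) (hqm : q ≤ σ^m)
    (P : List (Fin σ) → ℕ → ℕ → Prop) (hsrc : SrcOf P (sf σ m q k n hσ))
    {x u : ℕ} (hx : x < q) (hu : u ≤ x*k*(2*m+3)) :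
    u + phraseLen P (sf σ m q k n hσ) u ≤ x*k*(2*m+3) + (2*m+4) := by
  by_contra hc
  push_neg at hc
  have hslen : (sf σ m q k n hσ).length = n := sf_length σ m q k n hσ
  have hl2 : 2 ≤ phraseLen P (sf σ m q k n hσ) u := by omega
  have hP := pl_spec P (sf σ m q k n hσ) hl2
  obtain ⟨v, hv, hseg⟩ := hsrc u _ hl2 hP
  have hun : u < n := by
    rcases Nat.lt_or_ge u n with h | h
    · exact h
    · exfalso
      have h9 := Nat.findGreatest_le (P := fun t => P (sf σ m q k n hσ) u t)
        ((sf σ m q k n hσ).length - u)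
      have h10 : phraseLen P (sf σ m q k n hσ) u = 1 := by
        unfold phraseLen
        omega
      omega
  have hpn : u + phraseLen P (sf σ m q k n hσ) u ≤ n := by
    have := pl_add_le P (sf σ m q k n hσ) (by omega : u < (sf σ m q k n hσ).length)
    omega
  have hff := seg_ff_of_eq (n := n) hpn hseg
  exact no_skip hσ hk hq hqm hx hv hu (by omega) hff

theorem step_bound {σ m q k n : ℕ} (hσ : 2 ≤ σ) (hk : 1 ≤ k) (hq : 1 ≤ q) (hqm : q ≤ σ^m)
    (hn : q*k*(2*m+3) ≤ n) {x u : ℕ} (hx : x < q)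
    (hbu : x*k*(2*m+3) ≤ u) (hu3 : u + 3*(2*m+3) ≤ x*k*(2*m+3) + k*(2*m+3)) :
    u + phraseLen PermNov (sf σ m q k n hσ) u ≤ u + (2*(2*m+3)+1) ∨
    u + phraseLen PermNov (sf σ m q k n hσ) u ≤ u + (u - x*k*(2*m+3)) + (2*m+3) := by
  by_cases hsmall : phraseLen PermNov (sf σ m q k n hσ) u ≤ 2*(2*m+3)+1
  · left; omega
  right
  push_neg at hsmall
  have hslen : (sf σ m q k n hσ).length = n := sf_length σ m q k n hσ
  have hP := pl_spec PermNov (sf σ m q k n hσ) (by omega : 2 ≤ phraseLen PermNov (sf σ m q k n hσ) u)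
  obtain ⟨v, hvl, hseg⟩ := hP
  have hbkn : x*k*(2*m+3) + k*(2*m+3) ≤ n := by
    have h2 : (x+1)*(k*(2*m+3)) ≤ q*(k*(2*m+3)) := Nat.mul_le_mul_right _ hx
    have h3 : (x+1)*(k*(2*m+3)) = x*k*(2*m+3) + k*(2*m+3) := by ring
    have h4 : q*(k*(2*m+3)) = q*k*(2*m+3) := by ring
    omega
  have hun : u < (sf σ m q k n hσ).length := by omega
  have hℓn : u + phraseLen PermNov (sf σ m q k n hσ) u ≤ n := by
    have := pl_add_le PermNov (sf σ m q k n hσ) hun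
    omega
  have hff := seg_ff_of_eq (n := n) hℓn hseg
  obtain ⟨o, i', ho, hoi⟩ := align (2*m+3) u (by omega)
  have hxki : x*k ≤ i' := by
    have h1 : x*k*(2*m+3) ≤ i'*(2*m+3) := by omega
    exact Nat.le_of_mul_le_mul_right h1 (by omega)
  have hik : i' < x*k + k := by
    by_contra hcc
    push_neg at hcc
    have h2 := Nat.mul_le_mul_right (2*m+3) hcc
    have h3 : (x*k+k)*(2*m+3) = x*k*(2*m+3) + k*(2*m+3) := by ring
    omega
  have hblk : blkf q k i' = x := blk_in hx hxki hik
  have H : ∀ t, t < 2*m+5 → ff σ m q k ((v + o) + t) = ff σ m q k (x*k*(2*m+3) + t) := by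
    intro t ht
    have e1 : v + o + t = v + (o + t) := by omega
    have e2 : u + (o + t) = i'*(2*m+3) + t := by omega
    rw [e1, hff _ (by omega), e2]
    exact marker_content hk hx hblk ht
  have hfr := fresh hσ hk hq hqm hx H
  omega

theorem reach {σ m q k n : ℕ} (hσ : 2 ≤ σ) (hk : 1 ≤ k) (hq : 1 ≤ q) (hqm : q ≤ σ^m)
    (hn : q*k*(2*m+3) ≤ n) (P : List (Fin σ) → ℕ → ℕ → Prop)
    (hsrc : SrcOf P (sf σ m q k n hσ)) {x : ℕ} (hx : x < q) :
    ∀ g, g ≤ x*k*(2*m+3) →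
      ∃ u, x*k*(2*m+3) < u ∧ u ≤ x*k*(2*m+3) + (2*m+4) ∧
        1 + glen P (sf σ m q k n hσ) u ≤ glen P (sf σ m q k n hσ) g := by
  have hslen : (sf σ m q k n hσ).length = n := sf_length σ m q k n hσ
  have hbkn : x*k*(2*m+3) + k*(2*m+3) ≤ n := by
    have h2 : (x+1)*(k*(2*m+3)) ≤ q*(k*(2*m+3)) := Nat.mul_le_mul_right _ hx
    have h3 : (x+1)*(k*(2*m+3)) = x*k*(2*m+3) + k*(2*m+3) := by ring
    have h4 : q*(k*(2*m+3)) = q*k*(2*m+3) := by ring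
    omega
  have hkp : 0 < k*(2*m+3) := Nat.mul_pos (by omega) (by omega)
  have H : ∀ d g, g ≤ x*k*(2*m+3) → x*k*(2*m+3) - g ≤ d →
      ∃ u, x*k*(2*m+3) < u ∧ u ≤ x*k*(2*m+3) + (2*m+4) ∧
        1 + glen P (sf σ m q k n hσ) u ≤ glen P (sf σ m q k n hσ) g := by
    intro d
    induction d with
    | zero =>
      intro g hg hd
      have hj := jump_bound hσ hk hq hqm P hsrc hx hg
      have hpl := pl_one_le P (sf σ m q k n hσ) g
      refine ⟨g + phraseLen P (sf σ m q k n hσ) g, by omega, by omega, ?_⟩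
      rw [glen_lt P (sf σ m q k n hσ) (by omega : g < (sf σ m q k n hσ).length)]
    | succ d ih =>
      intro g hg hd
      have hgn : g < (sf σ m q k n hσ).length := by omega
      have hpl := pl_one_le P (sf σ m q k n hσ) g
      by_cases hjump : x*k*(2*m+3) < g + phraseLen P (sf σ m q k n hσ) g
      · have hj := jump_bound hσ hk hq hqm P hsrc hx hg
        refine ⟨g + phraseLen P (sf σ m q k n hσ) g, hjump, by omega, ?_⟩
        rw [glen_lt P (sf σ m q k n hσ) hgn]
      · push_neg at hjump
        obtain ⟨u, hu1, hu2, hu3⟩ := ih (g + phraseLen P (sf σ m q k n hσ) g) hjump (by omega)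
        refine ⟨u, hu1, hu2, ?_⟩
        rw [glen_lt P (sf σ m q k n hσ) hgn]
        omega
  intro g hg
  exact H (x*k*(2*m+3) - g) g hg (le_refl _)

end ZNLaux
namespace ZNLaux

theorem chain_gen {σ m q k n : ℕ} (hσ : 2 ≤ σ) (hk : 1 ≤ k) (hq : 1 ≤ q) (hqm : q ≤ σ^m)
    (hn : q*k*(2*m+3) ≤ n) {x : ℕ} (hx : x < q) :
    ∀ d u B, x*k*(2*m+3) ≤ u → u + 3*(2*m+3) ≤ x*k*(2*m+3) + B → 6*(2*m+3) ≤ B →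
      B * 2^(d+1) ≤ k*(2*m+3) →
      ∃ w, w ≤ x*k*(2*m+3) + k*(2*m+3) ∧
        (d+1) + glen PermNov (sf σ m q k n hσ) w ≤ glen PermNov (sf σ m q k n hσ) u := by
  have hslen : (sf σ m q k n hσ).length = n := sf_length σ m q k n hσ
  have hbkn : x*k*(2*m+3) + k*(2*m+3) ≤ n := by
    have h2 : (x+1)*(k*(2*m+3)) ≤ q*(k*(2*m+3)) := Nat.mul_le_mul_right _ hx
    have h3 : (x+1)*(k*(2*m+3)) = x*k*(2*m+3) + k*(2*m+3) := by ring
    have h4 : q*(k*(2*m+3)) = q*k*(2*m+3) := by ring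
    omega
  intro d
  induction d with
  | zero =>
    intro u B hbu hub hB6 hBk
    have hB2 : B * 2 ≤ k*(2*m+3) := by
      have h5 : B * 2^(0+1) = B*2 := by ring
      omega
    have hu3 : u + 3*(2*m+3) ≤ x*k*(2*m+3) + k*(2*m+3) := by omega
    have hun : u < (sf σ m q k n hσ).length := by omega
    have hst := step_bound hσ hk hq hqm hn hx hbu hu3
    refine ⟨u + phraseLen PermNov (sf σ m q k n hσ) u, by rcases hst with h | h <;> omega, ?_⟩
    rw [glen_lt PermNov (sf σ m q k n hσ) hun]
  | succ d ih =>
    intro u B hbu hub hB6 hBk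
    have h2pow : 2^1 ≤ 2^(d+1+1) := Nat.pow_le_pow_right (by omega) (by omega)
    have hBB : B ≤ B * 2^(d+1+1) := Nat.le_mul_of_pos_right _ (by positivity)
    have hBk' : (2*B) * 2^(d+1) ≤ k*(2*m+3) := by
      have h5 : B * 2^(d+1+1) = (2*B)*2^(d+1) := by ring
      omega
    have hB2 : B * 2 ≤ k*(2*m+3) := by
      have h6 : B * 2 = B * 2^1 := by ring
      have h7 : B * 2^1 ≤ B * 2^(d+1+1) := Nat.mul_le_mul_left _ h2pow
      omega
    have hu3 : u + 3*(2*m+3) ≤ x*k*(2*m+3) + k*(2*m+3) := by omega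
    have hun : u < (sf σ m q k n hσ).length := by omega
    have hst := step_bound hσ hk hq hqm hn hx hbu hu3
    have hpl := pl_one_le PermNov (sf σ m q k n hσ) u
    obtain ⟨w, hw1, hw2⟩ := ih (u + phraseLen PermNov (sf σ m q k n hσ) u) (2*B)
      (by omega) (by rcases hst with h | h <;> omega) (by omega) hBk'
    refine ⟨w, hw1, ?_⟩
    rw [glen_lt PermNov (sf σ m q k n hσ) hun]
    omega

theorem c_ov {σ m q k n : ℕ} (hσ : 2 ≤ σ) (hk : 2 ≤ k) (hq : 1 ≤ q) (hqm : q ≤ σ^m)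
    (hn : q*k*(2*m+3) ≤ n) :
    ∀ d x, x + d = q → ∀ g, g ≤ x*k*(2*m+3) → d ≤ glen PermOv (sf σ m q k n hσ) g := by
  intro d
  induction d with
  | zero => intro x hxd g hg; omega
  | succ d ih =>
    intro x hxd g hg
    have hx : x < q := by omega
    obtain ⟨u, hu1, hu2, hu3⟩ := reach hσ (by omega) hq hqm hn PermOv
      (srcOf_permOv _) hx g hg
    have hu' : u ≤ (x+1)*k*(2*m+3) := by
      have h1 : 2*(2*m+3) ≤ k*(2*m+3) := Nat.mul_le_mul_right _ hk
      have h2 : (x+1)*k*(2*m+3) = x*k*(2*m+3) + k*(2*m+3) := by ring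
      omega
    have := ih (x+1) (by omega) u hu'
    omega

theorem c_nov {σ m q k n : ℕ} (hσ : 2 ≤ σ) (hk : 14 ≤ k) (hq : 1 ≤ q) (hqm : q ≤ σ^m)
    (hn : q*k*(2*m+3) ≤ n) {T : ℕ} (hT : 12 * 2^T ≤ k) :
    ∀ d x, x + d = q → ∀ g, g ≤ x*k*(2*m+3) →
      d*(T+1) ≤ glen PermNov (sf σ m q k n hσ) g := by
  intro d
  induction d with
  | zero => intro x hxd g hg; omega
  | succ d ih =>
    intro x hxd g hg
    have hx : x < q := by omega
    obtain ⟨u, hu1, hu2, hu3⟩ := reach hσ (by omega) hq hqm hn PermNov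
      (srcOf_permNov _) hx g hg
    have hBk : 6*(2*m+3) * 2^(T+1) ≤ k*(2*m+3) := by
      have e : 6*(2*m+3)*2^(T+1) = (12*2^T)*(2*m+3) := by ring
      rw [e]
      exact Nat.mul_le_mul_right _ hT
    obtain ⟨w, hw1, hw2⟩ := chain_gen hσ (by omega) hq hqm hn hx T u (6*(2*m+3))
      (by omega) (by omega) (le_refl _) hBk
    have hw' : w ≤ (x+1)*k*(2*m+3) := by
      have h2 : (x+1)*k*(2*m+3) = x*k*(2*m+3) + k*(2*m+3) := by ring
      omega
    have hih := ih (x+1) (by omega) w hw'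
    have he : (d+1)*(T+1) = d*(T+1) + (T+1) := by ring
    omega

theorem zOv_lower {σ m q k n : ℕ} (hσ : 2 ≤ σ) (hk : 2 ≤ k) (hq : 1 ≤ q) (hqm : q ≤ σ^m)
    (hn : q*k*(2*m+3) ≤ n) : q ≤ zOv (sf σ m q k n hσ) := by
  have := c_ov hσ hk hq hqm hn q 0 (by omega) 0 (by omega)
  exact this

theorem zNov_lower {σ m q k n : ℕ} (hσ : 2 ≤ σ) (hk : 14 ≤ k) (hq : 1 ≤ q) (hqm : q ≤ σ^m)
    (hn : q*k*(2*m+3) ≤ n) {T : ℕ} (hT : 12 * 2^T ≤ k) :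
    q*(T+1) ≤ zNov (sf σ m q k n hσ) := by
  have := c_nov hσ hk hq hqm hn hT q 0 (by omega) 0 (by omega)
  exact this

end ZNLaux
namespace ZNLaux

theorem ff_shift_in {σ m q k : ℕ} (hk : 1 ≤ k) {x v : ℕ} (hx : x < q)
    (h1 : x*k*(2*m+3) ≤ v) (h2 : v + (2*m+3) < x*k*(2*m+3) + k*(2*m+3)) :
    ff σ m q k (v + (2*m+3)) = ff σ m q k v := by
  have hp : 0 < 2*m+3 := by omega
  have hd := Nat.div_add_mod v (2*m+3)
  have hc : (2*m+3) * (v/(2*m+3)) = (v/(2*m+3)) * (2*m+3) := Nat.mul_comm _ _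
  have hj : v % (2*m+3) < 2*m+3 := Nat.mod_lt _ hp
  have hv : v = (v/(2*m+3))*(2*m+3) + v % (2*m+3) := by omega
  have hvp : v + (2*m+3) = (v/(2*m+3)+1)*(2*m+3) + v % (2*m+3) := by
    have : (v/(2*m+3)+1)*(2*m+3) = (v/(2*m+3))*(2*m+3) + (2*m+3) := by ring
    omega
  have hxk : x*k ≤ v/(2*m+3) := by
    by_contra hcc
    push_neg at hcc
    have h3 : v/(2*m+3) + 1 ≤ x*k := by omega
    have h4 := Nat.mul_le_mul_right (2*m+3) h3
    have h5 : (v/(2*m+3)+1)*(2*m+3) = (v/(2*m+3))*(2*m+3) + (2*m+3) := by ring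
    omega
  have hik : v/(2*m+3) + 1 < x*k + k := by
    by_contra hcc
    push_neg at hcc
    have h4 := Nat.mul_le_mul_right (2*m+3) hcc
    have h5 : (x*k+k)*(2*m+3) = x*k*(2*m+3) + k*(2*m+3) := by ring
    have h6 : (v/(2*m+3)+1)*(2*m+3) = (v/(2*m+3))*(2*m+3) + (2*m+3) := by ring
    omega
  conv_lhs => rw [hvp]
  conv_rhs => rw [hv]
  rw [ff_align hj, ff_align hj, blk_in hx (by omega) hik, blk_in hx hxk (by omega)]

theorem ff_shift_last {σ m q k : ℕ} (hk : 1 ≤ k) (hq : 1 ≤ q) {v : ℕ}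
    (h1 : (q-1)*k*(2*m+3) ≤ v) :
    ff σ m q k (v + (2*m+3)) = ff σ m q k v := by
  have hp : 0 < 2*m+3 := by omega
  have hd := Nat.div_add_mod v (2*m+3)
  have hc : (2*m+3) * (v/(2*m+3)) = (v/(2*m+3)) * (2*m+3) := Nat.mul_comm _ _
  have hj : v % (2*m+3) < 2*m+3 := Nat.mod_lt _ hp
  have hv : v = (v/(2*m+3))*(2*m+3) + v % (2*m+3) := by omega
  have hvp : v + (2*m+3) = (v/(2*m+3)+1)*(2*m+3) + v % (2*m+3) := by
    have : (v/(2*m+3)+1)*(2*m+3) = (v/(2*m+3))*(2*m+3) + (2*m+3) := by ring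
    omega
  have hxk : (q-1)*k ≤ v/(2*m+3) := by
    by_contra hcc
    push_neg at hcc
    have h3 : v/(2*m+3) + 1 ≤ (q-1)*k := by omega
    have h4 := Nat.mul_le_mul_right (2*m+3) h3
    have h5 : (v/(2*m+3)+1)*(2*m+3) = (v/(2*m+3))*(2*m+3) + (2*m+3) := by ring
    omega
  conv_lhs => rw [hvp]
  conv_rhs => rw [hv]
  rw [ff_align hj, ff_align hj, blk_ge (by omega) (by omega), blk_ge (by omega) hxk]

/-- length of block `x` : `k` periods, except the last block which extends to `n`. -/
def Lx (m q k n x : ℕ) : ℕ := if x+1 = q then n - x*k*(2*m+3) else k*(2*m+3)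

theorem Lx_ge {m q k n x : ℕ} (hx : x < q) (hn : q*k*(2*m+3) ≤ n) :
    k*(2*m+3) ≤ Lx m q k n x := by
  unfold Lx
  split_ifs with h
  · have h2 : (x+1)*(k*(2*m+3)) ≤ q*(k*(2*m+3)) := Nat.mul_le_mul_right _ (by omega)
    have h3 : (x+1)*(k*(2*m+3)) = x*k*(2*m+3) + k*(2*m+3) := by ring
    have h4 : q*(k*(2*m+3)) = q*k*(2*m+3) := by ring
    omega
  · exact le_refl _

theorem Lx_end_le {m q k n x : ℕ} (hx : x < q) (hn : q*k*(2*m+3) ≤ n) :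
    x*k*(2*m+3) + Lx m q k n x ≤ n := by
  unfold Lx
  split_ifs with h
  · have h2 : x*k*(2*m+3) ≤ q*k*(2*m+3) :=
      Nat.mul_le_mul_right _ (Nat.mul_le_mul_right _ (by omega))
    omega
  · have h2 : (x+1)*(k*(2*m+3)) ≤ q*(k*(2*m+3)) := Nat.mul_le_mul_right _ (by omega)
    have h3 : (x+1)*(k*(2*m+3)) = x*k*(2*m+3) + k*(2*m+3) := by ring
    have h4 : q*(k*(2*m+3)) = q*k*(2*m+3) := by ring
    omega

theorem permOv_P5 {σ m q k n : ℕ} (hσ : 2 ≤ σ) (hq : 1 ≤ q) (hk : 1 ≤ k)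
    (hn : q*k*(2*m+3) ≤ n) {x : ℕ} (hx : x < q) :
    PermOv (sf σ m q k n hσ) (x*k*(2*m+3) + (2*m+3)) (Lx m q k n x - (2*m+3)) := by
  have hLge := Lx_ge (m := m) (n := n) hx hn
  have hLend := Lx_end_le (m := m) (n := n) hx hn
  have hk2 : 2*m+3 ≤ k*(2*m+3) := by
    have := Nat.mul_le_mul_right (2*m+3) hk
    omega
  refine ⟨x*k*(2*m+3), by omega, ?_⟩
  apply seg_eq_of_ff (by omega) (by omega)
  intro t ht
  have e1 : x*k*(2*m+3) + (2*m+3) + t = (x*k*(2*m+3) + t) + (2*m+3) := by omega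
  rw [e1]
  symm
  by_cases hlast : x + 1 = q
  · apply ff_shift_last hk hq
    have : (q-1)*k*(2*m+3) = x*k*(2*m+3) := by rw [show q - 1 = x from by omega]
    omega
  · apply ff_shift_in hk hx (by omega)
    unfold Lx at ht
    rw [if_neg hlast] at ht
    omega

theorem dgt_zero (σ m c : ℕ) : dgt σ m 0 c = 0 := by unfold dgt; simp

theorem Wf_pref {σ m x : ℕ} (hσ : 2 ≤ σ) (hx1 : 1 ≤ x) (hxm : x < σ^m) {t : ℕ}
    (ht : t < 2*(m - 1 - trl σ m x)+3) : Wf σ m (x-1) t = Wf σ m x t := by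
  have htr := trl_lt hx1 hxm
  have hm1 : 1 ≤ m := by
    rcases Nat.eq_zero_or_pos m with h | h
    · subst h; rw [pow_zero] at hxm; omega
    · omega
  rcases Nat.lt_or_ge t 2 with h2 | h2
  · rw [Wf_zero h2, Wf_zero h2]
  rcases Nat.even_or_odd t with he | ho
  · have hev : t % 2 = 0 := Nat.even_iff.mp he
    rw [Wf_even h2 hev (by omega), Wf_even h2 hev (by omega)]
  · have hod : t % 2 = 1 := Nat.odd_iff.mp ho
    obtain ⟨c, hc⟩ : ∃ c, t = 2*c+3 := ⟨(t-3)/2, by omega⟩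
    subst hc
    rw [Wf_digit, Wf_digit]
    exact (dgt_pred hσ hx1 hxm (by omega)).symm

theorem permOv_P1 {σ m q k n : ℕ} (hσ : 2 ≤ σ) (hq : 1 ≤ q) (hk : 1 ≤ k) (hqm : q ≤ σ^m)
    (hn : q*k*(2*m+3) ≤ n) {x : ℕ} (hx1 : 1 ≤ x) (hx : x < q) :
    PermOv (sf σ m q k n hσ) (x*k*(2*m+3)) (2*(m - 1 - trl σ m x)+3) := by
  have hxk1 : 1 ≤ x*k := Nat.mul_le_mul hx1 hk
  have hkk : (x-1)*k + k = x*k := by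
    have : (x-1+1)*k = (x-1)*k + k := by ring
    rw [show x-1+1 = x from by omega] at this
    omega
  have hvlt : (x*k-1)*(2*m+3) < x*k*(2*m+3) := by
    have e : (x*k-1+1)*(2*m+3) = (x*k-1)*(2*m+3) + (2*m+3) := by ring
    rw [show x*k-1+1 = x*k from by omega] at e
    omega
  have hbn : x*k*(2*m+3) + (2*m+3) ≤ n := by
    have h2 : (x+1)*(k*(2*m+3)) ≤ q*(k*(2*m+3)) := Nat.mul_le_mul_right _ hx
    have h3 : (x+1)*(k*(2*m+3)) = x*k*(2*m+3) + k*(2*m+3) := by ring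
    have h4 : q*(k*(2*m+3)) = q*k*(2*m+3) := by ring
    have h5 : 2*m+3 ≤ k*(2*m+3) := by
      have := Nat.mul_le_mul_right (2*m+3) hk
      omega
    omega
  refine ⟨(x*k-1)*(2*m+3), hvlt, ?_⟩
  apply seg_eq_of_ff (by omega) (by omega)
  intro t ht
  have ht' : t < 2*m+3 := by omega
  have e1 : (x*k-1)*(2*m+3) + t = (x*k-1)*(2*m+3) + t := rfl
  rw [ff_align ht', ff_align (i := x*k) ht', blk_in hx (le_refl _) (by omega),
    blk_in (x := x-1) (by omega) (by omega) (by omega)]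
  exact Wf_pref hσ hx1 (by omega) ht

theorem permOv_P3 {σ m q k n : ℕ} (hσ : 2 ≤ σ) (hq : 1 ≤ q) (hk : 1 ≤ k) (hqm : q ≤ σ^m)
    (hn : q*k*(2*m+3) ≤ n) {x : ℕ} (hx1 : 1 ≤ x) (hx : x < q) (htr : 1 ≤ trl σ m x) :
    PermOv (sf σ m q k n hσ) (x*k*(2*m+3) + (2*(m - 1 - trl σ m x)+4)) (2*trl σ m x) := by
  have htm : trl σ m x < m := trl_lt hx1 (by omega : x < σ^m)
  have hbn : x*k*(2*m+3) + (2*m+3) ≤ n := by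
    have h2 : (x+1)*(k*(2*m+3)) ≤ q*(k*(2*m+3)) := Nat.mul_le_mul_right _ hx
    have h3 : (x+1)*(k*(2*m+3)) = x*k*(2*m+3) + k*(2*m+3) := by ring
    have h4 : q*(k*(2*m+3)) = q*k*(2*m+3) := by ring
    have h5 : 2*m+3 ≤ k*(2*m+3) := by
      have := Nat.mul_le_mul_right (2*m+3) hk
      omega
    omega
  refine ⟨2, by omega, ?_⟩
  apply seg_eq_of_ff (by omega) (by omega)
  intro t ht
  have e1 : 2 + t = 0*(2*m+3) + (2+t) := by omega
  have e2 : x*k*(2*m+3) + (2*(m - 1 - trl σ m x)+4) + t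
      = x*k*(2*m+3) + (2*(m - 1 - trl σ m x)+4+t) := by omega
  rw [e1, e2, ff_align (by omega), ff_align (by omega),
    blk_in (x := 0) hq (by omega) (by omega), blk_in hx (le_refl _) (by omega)]
  rcases Nat.even_or_odd t with hev | hod
  · have hev' : t % 2 = 0 := Nat.even_iff.mp hev
    rw [Wf_even (by omega) (by omega) (by omega), Wf_even (by omega) (by omega) (by omega)]
  · have hod' : t % 2 = 1 := Nat.odd_iff.mp hod
    have e3 : 2 + t = 2*((t-1)/2)+3 := by omega
    have e4 : 2*(m - 1 - trl σ m x)+4+t = 2*((m - 1 - trl σ m x) + 1 + (t-1)/2)+3 := by omega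
    rw [e3, e4, Wf_digit, Wf_digit, dgt_zero, dgt_trail_zero hσ (by omega)]

end ZNLaux
namespace ZNLaux

def blockLens (σ m q k n x : ℕ) : List ℕ :=
  if x = 0 then List.replicate (2*m+3) 1 ++ [Lx m q k n 0 - (2*m+3)]
  else [2*(m - 1 - trl σ m x)+3, 1] ++
    (if trl σ m x = 0 then [] else [2 * trl σ m x]) ++
    [1, Lx m q k n x - (2*m+3)]

theorem blockLens_sum {σ m q k n x : ℕ} (hk : 1 ≤ k) (hqm : q ≤ σ^m)
    (hn : q*k*(2*m+3) ≤ n) (hx : x < q) :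
    (blockLens σ m q k n x).sum = Lx m q k n x := by
  have hLge := Lx_ge (m := m) (n := n) hx hn
  have hkp : 2*m+3 ≤ k*(2*m+3) := by
    have := Nat.mul_le_mul_right (2*m+3) hk
    omega
  unfold blockLens
  by_cases h0 : x = 0
  · subst h0
    simp [List.sum_replicate]
    omega
  · have hx1 : 1 ≤ x := by omega
    have htm : trl σ m x < m := trl_lt hx1 (by omega : x < σ^m)
    rw [if_neg h0]
    split_ifs with ht <;> simp [List.sum_append] <;> omega

theorem blockLens_length {σ m q k n x : ℕ} (h1 : 1 ≤ x) :
    (blockLens σ m q k n x).length ≤ 5 := by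
  unfold blockLens
  rw [if_neg (by omega)]
  split_ifs <;> simp

theorem blockLens0_length {σ m q k n : ℕ} :
    (blockLens σ m q k n 0).length = 2*m+4 := by
  unfold blockLens
  rw [if_pos rfl]
  simp

def restLens (σ m q k n x : ℕ) : List ℕ :=
  if _h : x < q then blockLens σ m q k n x ++ restLens σ m q k n (x+1) else []
  termination_by q - x

theorem restLens_sum {σ m q k n : ℕ} (hk : 1 ≤ k) (hqm : q ≤ σ^m)
    (hn : q*k*(2*m+3) ≤ n) :
    ∀ e x, q ≤ x + e → x < q → (restLens σ m q k n x).sum = n - x*k*(2*m+3) := by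
  intro e
  induction e with
  | zero => intro x he hx; omega
  | succ e ih =>
    intro x he hx
    rw [restLens, dif_pos hx, List.sum_append, blockLens_sum hk hqm hn hx]
    by_cases hlast : x + 1 = q
    · rw [restLens, dif_neg (by omega)]
      unfold Lx
      rw [if_pos hlast]
      simp
    · have hih := ih (x+1) (by omega) (by omega)
      rw [hih]
      unfold Lx
      rw [if_neg hlast]
      have h3 : (x+1)*k*(2*m+3) = x*k*(2*m+3) + k*(2*m+3) := by ring
      have h2 : (x+1)*(k*(2*m+3)) ≤ q*(k*(2*m+3)) := Nat.mul_le_mul_right _ (by omega)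
      have h4 : (x+1)*(k*(2*m+3)) = (x+1)*k*(2*m+3) := by ring
      have h5 : q*(k*(2*m+3)) = q*k*(2*m+3) := by ring
      omega

theorem restLens_length {σ m q k n : ℕ} :
    ∀ e x, q ≤ x + e → 1 ≤ x → (restLens σ m q k n x).length ≤ 5*(q-x) := by
  intro e
  induction e with
  | zero =>
    intro x he hx
    rw [restLens, dif_neg (by omega)]
    simp
  | succ e ih =>
    intro x he hx
    by_cases hxq : x < q
    · rw [restLens, dif_pos hxq, List.length_append]
      have h1 := blockLens_length (σ := σ) (m := m) (q := q) (k := k) (n := n) hx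
      have h2 := ih (x+1) (by omega) (by omega)
      omega
    · rw [restLens, dif_neg hxq]
      simp

theorem okL_replicate {α : Type*} (P : List α → ℕ → ℕ → Prop) (s : List α) :
    ∀ j a, OkL P s a (List.replicate j 1) := by
  intro j
  induction j with
  | zero => intro a; trivial
  | succ j ih =>
    intro a
    rw [List.replicate_succ]
    exact ⟨Or.inl rfl, ih (a+1)⟩

theorem okL_blockx {σ m q k n : ℕ} (hσ : 2 ≤ σ) (hq : 1 ≤ q) (hk : 1 ≤ k) (hqm : q ≤ σ^m)
    (hn : q*k*(2*m+3) ≤ n) {x : ℕ} (hx1 : 1 ≤ x) (hx : x < q) :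
    OkL PermOv (sf σ m q k n hσ) (x*k*(2*m+3)) (blockLens σ m q k n x) := by
  have htm : trl σ m x < m := trl_lt hx1 (by omega : x < σ^m)
  have hP1 := permOv_P1 hσ hq hk hqm hn hx1 hx
  have hP5 := permOv_P5 (m := m) hσ hq hk hn hx
  unfold blockLens
  rw [if_neg (by omega)]
  by_cases ht : trl σ m x = 0
  · rw [if_pos ht]
    refine ⟨Or.inr hP1, Or.inl rfl, Or.inl rfl, Or.inr ?_, trivial⟩
    have e : x*k*(2*m+3) + (2*(m - 1 - trl σ m x)+3) + 1 + 1 = x*k*(2*m+3) + (2*m+3) := by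
      omega
    rw [e]
    exact hP5
  · rw [if_neg ht]
    have hP3 := permOv_P3 hσ hq hk hqm hn hx1 hx (by omega)
    refine ⟨Or.inr hP1, Or.inl rfl, Or.inr ?_, Or.inl rfl, Or.inr ?_, trivial⟩
    · have e : x*k*(2*m+3) + (2*(m - 1 - trl σ m x)+3) + 1
          = x*k*(2*m+3) + (2*(m - 1 - trl σ m x)+4) := by omega
      rw [e]
      exact hP3
    · have e : x*k*(2*m+3) + (2*(m - 1 - trl σ m x)+3) + 1 + 2*trl σ m x + 1
          = x*k*(2*m+3) + (2*m+3) := by omega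
      rw [e]
      exact hP5

theorem okL_block0 {σ m q k n : ℕ} (hσ : 2 ≤ σ) (hq : 1 ≤ q) (hk : 1 ≤ k)
    (hn : q*k*(2*m+3) ≤ n) :
    OkL PermOv (sf σ m q k n hσ) 0 (blockLens σ m q k n 0) := by
  unfold blockLens
  rw [if_pos rfl]
  apply okL_append
  · exact okL_replicate _ _ _ _
  · have hP5 := permOv_P5 (m := m) hσ hq hk hn (x := 0) (by omega)
    have e : 0 + (List.replicate (2*m+3) (1:ℕ)).sum = 0*k*(2*m+3) + (2*m+3) := by
      simp [List.sum_replicate]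
    rw [e]
    exact ⟨Or.inr hP5, trivial⟩

theorem okL_rest {σ m q k n : ℕ} (hσ : 2 ≤ σ) (hq : 1 ≤ q) (hk : 1 ≤ k) (hqm : q ≤ σ^m)
    (hn : q*k*(2*m+3) ≤ n) :
    ∀ e x, q ≤ x + e → 1 ≤ x → OkL PermOv (sf σ m q k n hσ) (x*k*(2*m+3))
      (restLens σ m q k n x) := by
  intro e
  induction e with
  | zero =>
    intro x he hx
    rw [restLens, dif_neg (by omega)]
    trivial
  | succ e ih =>
    intro x he hx
    by_cases hxq : x < q
    · rw [restLens, dif_pos hxq]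
      apply okL_append
      · exact okL_blockx hσ hq hk hqm hn hx hxq
      · rw [blockLens_sum hk hqm hn hxq]
        by_cases hlast : x + 1 = q
        · rw [restLens, dif_neg (by omega)]
          trivial
        · have e2 : x*k*(2*m+3) + Lx m q k n x = (x+1)*k*(2*m+3) := by
            unfold Lx
            rw [if_neg hlast]
            have h3 : (x+1)*k*(2*m+3) = x*k*(2*m+3) + k*(2*m+3) := by ring
            omega
          rw [e2]
          exact ih (x+1) (by omega) (by omega)
    · rw [restLens, dif_neg hxq]
      trivial

theorem okL_total {σ m q k n : ℕ} (hσ : 2 ≤ σ) (hq : 1 ≤ q) (hk : 1 ≤ k) (hqm : q ≤ σ^m)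
    (hn : q*k*(2*m+3) ≤ n) :
    OkL PermOv (sf σ m q k n hσ) 0 (restLens σ m q k n 0) := by
  rw [restLens, dif_pos (by omega : 0 < q)]
  apply okL_append
  · exact okL_block0 hσ hq hk hn
  · rw [blockLens_sum hk hqm hn (by omega : 0 < q)]
    by_cases hlast : (0:ℕ) + 1 = q
    · rw [restLens, dif_neg (by omega)]
      trivial
    · have e2 : 0 + Lx m q k n 0 = 1*k*(2*m+3) := by
        unfold Lx
        rw [if_neg (by omega)]
        ring
      rw [e2]
      exact okL_rest hσ hq hk hqm hn (q - 1) 1 (by omega) (by omega)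

theorem zOv_upper {σ m q k n : ℕ} (hσ : 2 ≤ σ) (hq : 1 ≤ q) (hk : 1 ≤ k) (hqm : q ≤ σ^m)
    (hn : q*k*(2*m+3) ≤ n) :
    zOv (sf σ m q k n hσ) ≤ 2*m+4 + 5*(q-1) := by
  have hok := okL_total hσ hq hk hqm hn
  have hsum : (restLens σ m q k n 0).sum = n := by
    have := restLens_sum hk hqm hn q 0 (by omega) (by omega)
    simpa using this
  have hlen : (restLens σ m q k n 0).length ≤ 2*m+4 + 5*(q-1) := by
    rw [restLens, dif_pos (by omega : 0 < q), List.length_append,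
      blockLens0_length]
    have := restLens_length (σ := σ) (m := m) (q := q) (k := k) (n := n) (q-1) (0+1)
      (by omega) (by omega)
    omega
  have := glen_le_okL (s := sf σ m q k n hσ) (restLens σ m q k n 0) 0 0 hok
    (by rw [sf_length]; omega) (le_refl 0)
  exact le_trans this hlen

end ZNLaux
namespace ZNLaux

open Real

theorem logb_ge_one {σ z : ℕ} (hσ : 2 ≤ σ) (hz : σ ≤ z) : 1 ≤ Real.logb σ z := by
  have hb : (1:ℝ) < σ := by exact_mod_cast (by omega : 1 < σ)
  have hz0 : (0:ℝ) < z := by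
    have : 0 < z := by omega
    exact_mod_cast this
  rw [Real.le_logb_iff_rpow_le hb hz0, Real.rpow_one]
  exact_mod_cast hz

theorem logb_nat_le {a T : ℕ} (ha : 1 ≤ a) (hT : a < 2^(T+1)) :
    Real.logb 2 a ≤ (T:ℝ)+1 := by
  have h1 : Real.logb 2 (a:ℝ) ≤ Real.logb 2 ((2:ℝ)^(T+1)) := by
    apply Real.logb_le_logb_of_le one_lt_two (by exact_mod_cast ha)
    exact_mod_cast hT.le
  have h2 : Real.logb 2 ((2:ℝ)^(T+1)) = (T:ℝ)+1 := by
    rw [Real.logb_pow, Real.logb_self_eq_one one_lt_two]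
    push_cast
    ring
  linarith

end ZNLaux
namespace ZNLaux

open Real

theorem fallback {n σ z : ℕ} (hσ2 : 2 ≤ σ) (hn1 : 1 < n) (hσz : σ ≤ z) (hzn : z ≤ n)
    (hsmall : n ≤ 2^22) :
    ∃ s : List (Fin σ), s.length = n ∧
      ((2:ℝ)^30)⁻¹ * z ≤ (zOv s : ℝ) ∧ (zOv s : ℝ) ≤ 2^22 * z ∧
      ((2:ℝ)^30)⁻¹ * z * Real.logb 2 ((n:ℝ) / ((z:ℝ) * Real.logb σ z)) ≤ (zNov s : ℝ) := by
  have hz2 : 2 ≤ z := le_trans hσ2 hσz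
  have hlen : (sf σ 0 1 1 n hσ2).length = n := sf_length _ _ _ _ _ _
  have hOv1 : 1 ≤ zOv (sf σ 0 1 1 n hσ2) :=
    one_le_glen PermOv (sf σ 0 1 1 n hσ2) (by rw [hlen]; omega)
  have hOvn : zOv (sf σ 0 1 1 n hσ2) ≤ n := by
    have := glen_le_sub PermOv (sf σ 0 1 1 n hσ2) 0
    rw [hlen] at this
    exact le_trans this (by omega)
  have hNov1 : 1 ≤ zNov (sf σ 0 1 1 n hσ2) :=
    one_le_glen PermNov (sf σ 0 1 1 n hσ2) (by rw [hlen]; omega)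
  have hz0 : (0:ℝ) < z := by exact_mod_cast (by omega : 0 < z)
  have hn0 : (0:ℝ) < n := by exact_mod_cast (by omega : 0 < n)
  have hzr : (z:ℝ) ≤ 2^22 := by
    have : (z:ℝ) ≤ (n:ℝ) := by exact_mod_cast hzn
    have h2 : (n:ℝ) ≤ ((2^22 : ℕ):ℝ) := by exact_mod_cast hsmall
    push_cast at h2
    linarith
  refine ⟨sf σ 0 1 1 n hσ2, hlen, ?_, ?_, ?_⟩
  · have h1 : (1:ℝ) ≤ (zOv (sf σ 0 1 1 n hσ2) : ℝ) := by exact_mod_cast hOv1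
    nlinarith
  · have h1 : (zOv (sf σ 0 1 1 n hσ2) : ℝ) ≤ n := by exact_mod_cast hOvn
    have h2 : (n:ℝ) ≤ 2^22 := by
      have h3 : (n:ℝ) ≤ ((2^22:ℕ):ℝ) := by exact_mod_cast hsmall
      push_cast at h3
      linarith
    have h4 : (1:ℝ) ≤ (z:ℝ) := by exact_mod_cast (by omega : 1 ≤ z)
    nlinarith
  · -- the nov bound
    have hLσ1 : 1 ≤ Real.logb σ z := logb_ge_one hσ2 hσz
    have hzL0 : (0:ℝ) < (z:ℝ) * Real.logb σ z := by nlinarith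
    have hzLz : (z:ℝ) ≤ (z:ℝ) * Real.logb σ z := by nlinarith
    have hquot_le : (n:ℝ)/((z:ℝ)*Real.logb σ z) ≤ (n:ℝ)/(z:ℝ) := by
      apply div_le_div_of_nonneg_left (le_of_lt hn0) hz0 hzLz
    have hL_le : Real.logb 2 ((n:ℝ)/((z:ℝ)*Real.logb σ z)) ≤ Real.logb 2 ((n:ℝ)/(z:ℝ)) :=
      Real.logb_le_logb_of_le one_lt_two (by positivity) hquot_le
    have hnz_pos : (0:ℝ) < (n:ℝ)/(z:ℝ) := by positivity
    have hlogupper : Real.log ((n:ℝ)/(z:ℝ)) ≤ (n:ℝ)/(z:ℝ) - 1 :=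
      Real.log_le_sub_one_of_pos hnz_pos
    have hlog2 : (0.6931471803:ℝ) < Real.log 2 := Real.log_two_gt_d9
    have hcancel : (z:ℝ) * ((n:ℝ)/(z:ℝ)) = (n:ℝ) := by
      field_simp
    have hkey : (z:ℝ) * Real.log ((n:ℝ)/(z:ℝ)) ≤ (n:ℝ) := by nlinarith
    have hlogb_eq : Real.logb 2 ((n:ℝ)/(z:ℝ)) = Real.log ((n:ℝ)/(z:ℝ)) / Real.log 2 := rfl
    have hzlogb : (z:ℝ) * Real.logb 2 ((n:ℝ)/(z:ℝ)) ≤ 2^23 := by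
      rw [hlogb_eq]
      rw [mul_div_assoc']
      rw [div_le_iff₀ (by linarith)]
      have hn22 : (n:ℝ) ≤ 2^22 := by
        have h3 : (n:ℝ) ≤ ((2^22:ℕ):ℝ) := by exact_mod_cast hsmall
        push_cast at h3
        linarith
      nlinarith
    have hzL_le : (z:ℝ) * Real.logb 2 ((n:ℝ)/((z:ℝ)*Real.logb σ z)) ≤ 2^23 := by
      have := mul_le_mul_of_nonneg_left hL_le (le_of_lt hz0)
      linarith
    have h1 : (1:ℝ) ≤ (zNov (sf σ 0 1 1 n hσ2) : ℝ) := by exact_mod_cast hNov1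
    nlinarith
end ZNLaux
namespace ZNLaux

open Real

set_option maxHeartbeats 2000000 in
theorem main_case {n σ z : ℕ} (hσ2 : 2 ≤ σ) (hσz : σ ≤ z) (hzn : z ≤ n)
    (hbig : 2^22 ≤ n) (hzL : (z:ℝ) * Real.logb σ z ≤ (n:ℝ)) :
    ∃ s : List (Fin σ), s.length = n ∧
      ((2:ℝ)^30)⁻¹ * z ≤ (zOv s : ℝ) ∧ (zOv s : ℝ) ≤ 2^22 * z ∧
      ((2:ℝ)^30)⁻¹ * z * Real.logb 2 ((n:ℝ) / ((z:ℝ) * Real.logb σ z)) ≤ (zNov s : ℝ) := by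
  have hz2 : 2 ≤ z := le_trans hσ2 hσz
  set q := max 1 (z/100) with hq_def
  set m := Nat.clog σ q with hm_def
  set k := n / (q*(2*m+3)) with hk_def
  have hq1 : 1 ≤ q := le_max_left _ _
  have hqm : q ≤ σ^m := Nat.le_pow_clog (by omega) q
  have hqz : q ≤ z := by omega
  have hq200 : z ≤ 200*q := by omega
  have hLσ1 : 1 ≤ Real.logb σ z := logb_ge_one hσ2 hσz
  have hz0 : (0:ℝ) < z := by exact_mod_cast (by omega : 0 < z)
  have hn0 : (0:ℝ) < n := by exact_mod_cast (by omega : 0 < n)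
  have hq0 : (0:ℝ) < q := by exact_mod_cast hq1
  -- bound on the period length
  have hp7 : ((2*m+3 : ℕ):ℝ) ≤ 7 * Real.logb σ z := by
    by_cases hq1' : q = 1
    · have hm0 : m = 0 := by rw [hm_def, hq1', Nat.clog_one_right]
      rw [hm0]
      push_cast
      linarith
    · have hq2 : 2 ≤ q := by omega
      have hm1 : 1 ≤ m := Nat.clog_pos (by omega) (by omega)
      have hpow : σ^(m-1) < q := Nat.pow_pred_clog_lt_self (by omega) (by omega)
      have hcast : ((σ:ℝ))^(m-1) ≤ (z:ℝ) := by
        exact_mod_cast le_of_lt (lt_of_lt_of_le hpow hqz)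
      have hσr : (1:ℝ) < (σ:ℝ) := by exact_mod_cast (by omega : 1 < σ)
      have h1 : Real.logb σ ((σ:ℝ)^(m-1)) ≤ Real.logb σ z :=
        Real.logb_le_logb_of_le hσr (by positivity) hcast
      rw [Real.logb_pow, Real.logb_self_eq_one hσr, mul_one] at h1
      have h2 : ((m-1 : ℕ):ℝ) = (m:ℝ) - 1 := by
        rw [Nat.cast_sub hm1]
        norm_num
      rw [h2] at h1
      push_cast
      linarith
  -- enough room for 14 periods per block
  have hkey : 14*(q*(2*m+3)) ≤ n := by
    by_cases hz100 : z < 100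
    · have hq1' : q = 1 := by omega
      have hm0 : m = 0 := by rw [hm_def, hq1', Nat.clog_one_right]
      rw [hq1', hm0]
      omega
    · push_neg at hz100
      have hq100 : 100*q ≤ z := by omega
      have hq_le : (q:ℝ) ≤ (z:ℝ)/100 := by
        have : ((100*q : ℕ):ℝ) ≤ (z:ℝ) := by exact_mod_cast hq100
        push_cast at this
        linarith
      have hp_nonneg : (0:ℝ) ≤ ((2*m+3:ℕ):ℝ) := by positivity
      have hcast : ((14*(q*(2*m+3)):ℕ):ℝ) ≤ (n:ℝ) := by
        push_cast
        have e2 : (q:ℝ)*((2*m+3:ℕ):ℝ) ≤ ((z:ℝ)/100)*(7*Real.logb σ z) := by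
          apply mul_le_mul hq_le hp7 hp_nonneg (by positivity)
        push_cast at e2
        nlinarith
      exact_mod_cast hcast
  have hqp0 : 0 < q*(2*m+3) := by positivity
  have hk14 : 14 ≤ k := by
    rw [hk_def, Nat.le_div_iff_mul_le hqp0]
    omega
  have hlayout : q*k*(2*m+3) ≤ n := by
    have h1 := Nat.div_mul_le_self n (q*(2*m+3))
    have e : q*k*(2*m+3) = (n/(q*(2*m+3)))*(q*(2*m+3)) := by rw [hk_def]; ring
    omega
  -- lower/upper bounds on the parsings
  have hOvLow := zOv_lower hσ2 (by omega : 2 ≤ k) hq1 hqm hlayout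
  have hOvUp := zOv_upper hσ2 hq1 (by omega : 1 ≤ k) hqm hlayout
  have hmq : m ≤ q := by
    have h1 : q ≤ 2^q := (Nat.lt_two_pow_self (n := q)).le
    have h2 : (2:ℕ)^q ≤ σ^q := Nat.pow_le_pow_left hσ2 q
    have h3 := (Nat.clog_le_iff_le_pow (by omega : 1 < σ)).mpr (le_trans h1 h2)
    omega
  set T := Nat.log 2 (k/14) with hT_def
  have hT : 12 * 2^T ≤ k := by
    have h1 : 2^T ≤ k/14 := Nat.pow_log_le_self 2 (by omega : k/14 ≠ 0)
    have h2 := Nat.div_add_mod k 14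
    omega
  have hNovLow := zNov_lower hσ2 hk14 hq1 hqm hlayout hT
  refine ⟨sf σ m q k n hσ2, sf_length _ _ _ _ _ _, ?_, ?_, ?_⟩
  · -- zOv lower
    have h1 : (q:ℝ) ≤ (zOv (sf σ m q k n hσ2) : ℝ) := by exact_mod_cast hOvLow
    have h2 : (z:ℝ) ≤ 200*(q:ℝ) := by exact_mod_cast hq200
    nlinarith
  · -- zOv upper
    have h1 : zOv (sf σ m q k n hσ2) ≤ 7*z := by omega
    have h2 : (zOv (sf σ m q k n hσ2) : ℝ) ≤ 7*(z:ℝ) := by exact_mod_cast h1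
    nlinarith
  · -- zNov lower
    have hnov : (q:ℝ) * ((T:ℝ)+1) ≤ (zNov (sf σ m q k n hσ2) : ℝ) := by
      have : ((q*(T+1) : ℕ):ℝ) ≤ (zNov (sf σ m q k n hσ2) : ℝ) := by exact_mod_cast hNovLow
      push_cast at this
      linarith
    have hT1 : (1:ℝ) ≤ (T:ℝ)+1 := by
      have : (0:ℝ) ≤ (T:ℝ) := Nat.cast_nonneg T
      linarith
    have hzL0 : (0:ℝ) < (z:ℝ) * Real.logb σ z := by nlinarith
    have hL0 : 0 ≤ Real.logb 2 ((n:ℝ)/((z:ℝ)*Real.logb σ z)) := by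
      apply Real.logb_nonneg one_lt_two
      rw [le_div_iff₀ hzL0]
      linarith
    -- upper bound on L via T
    have hk140 : 1 ≤ k/14 := by omega
    have hX0 : (1:ℝ) ≤ ((k/14 : ℕ):ℝ) := by exact_mod_cast hk140
    have hTpow : k/14 < 2^(T+1) := Nat.lt_pow_succ_log_self (by omega) _
    have f1 : Real.logb 2 ((k/14 : ℕ):ℝ) ≤ (T:ℝ)+1 := logb_nat_le hk140 hTpow
    -- n ≤ 2 * (q*(2m+3)) * k  and  k ≤ 28 * (k/14)
    have hbridge : (q*(2*m+3))*k = (q*(2*m+3))*(n/(q*(2*m+3))) := by rw [hk_def]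
    have h5N : n ≤ 2*((q*(2*m+3))*k) := by
      have h2 := Nat.div_add_mod n (q*(2*m+3))
      have h3 : n % (q*(2*m+3)) < q*(2*m+3) := Nat.mod_lt _ hqp0
      have h4 : q*(2*m+3) ≤ (q*(2*m+3))*k := Nat.le_mul_of_pos_right _ (by omega)
      omega
    have hk28N : k ≤ 28*(k/14) := by
      have h2 := Nat.div_add_mod k 14
      omega
    have hnk : (n:ℝ) ≤ 2*((q:ℝ)*((2*m+3:ℕ):ℝ))*(k:ℝ) := by
      have h6 : ((2*((q*(2*m+3))*k) : ℕ):ℝ) = 2*((q:ℝ)*((2*m+3:ℕ):ℝ))*(k:ℝ) := by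
        push_cast
        ring
      have h7 : (n:ℝ) ≤ ((2*((q*(2*m+3))*k) : ℕ):ℝ) := by exact_mod_cast h5N
      linarith
    have hk28 : (k:ℝ) ≤ 28*((k/14:ℕ):ℝ) := by exact_mod_cast hk28N
    by_cases hz100 : z < 100
    · -- small z : q = 1, m = 0
      have hq1' : q = 1 := by omega
      have hm0 : m = 0 := by rw [hm_def, hq1', Nat.clog_one_right]
      have e : q*(2*m+3) = 3 := by rw [hq1', hm0]
      have h5' : n ≤ 2*(3*k) := by rw [e] at h5N; exact h5N
      have hn168N : n ≤ 168*(k/14) := by omega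
      have hn168 : (n:ℝ) ≤ 168*((k/14:ℕ):ℝ) := by exact_mod_cast hn168N
      have hlogn : Real.logb 2 ((n:ℝ)/168) ≤ Real.logb 2 ((k/14:ℕ):ℝ) := by
        apply Real.logb_le_logb_of_le one_lt_two (by positivity)
        rw [div_le_iff₀ (by norm_num : (0:ℝ) < 168)]
        nlinarith
      have hsplit : Real.logb 2 ((n:ℝ)/168) = Real.logb 2 (n:ℝ) - Real.logb 2 168 := by
        rw [Real.logb_div (by positivity) (by norm_num)]
      have h168 : Real.logb 2 (168:ℝ) ≤ 8 := by
        have h1 : Real.logb 2 (168:ℝ) ≤ Real.logb 2 ((2:ℝ)^(8:ℕ)) := by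
          apply Real.logb_le_logb_of_le one_lt_two (by norm_num)
          norm_num
        rw [Real.logb_pow, Real.logb_self_eq_one one_lt_two] at h1
        push_cast at h1
        linarith
      have hXn : (22:ℝ) ≤ Real.logb 2 (n:ℝ) := by
        have h1 : Real.logb 2 ((2:ℝ)^(22:ℕ)) ≤ Real.logb 2 (n:ℝ) := by
          apply Real.logb_le_logb_of_le one_lt_two (by positivity)
          have : ((2^22:ℕ):ℝ) ≤ (n:ℝ) := by exact_mod_cast hbig
          push_cast at this
          linarith
        rw [Real.logb_pow, Real.logb_self_eq_one one_lt_two] at h1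
        push_cast at h1
        linarith
      have hLn : Real.logb 2 ((n:ℝ)/((z:ℝ)*Real.logb σ z)) ≤ Real.logb 2 (n:ℝ) := by
        apply Real.logb_le_logb_of_le one_lt_two (by positivity)
        rw [div_le_iff₀ hzL0]
        have hz1r : (1:ℝ) ≤ (z:ℝ) := by exact_mod_cast (by omega : 1 ≤ z)
        have hzz := mul_le_mul_of_nonneg_left hLσ1 (le_of_lt hz0)
        rw [mul_one] at hzz
        nlinarith [mul_nonneg (le_of_lt hn0)
          (show (0:ℝ) ≤ (z:ℝ)*Real.logb σ z - 1 by linarith)]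
      -- zNov ≥ T+1 ≥ logb2 n - 8 ≥ logb2 n / 2 ; c₃ z L ≤ 99·2⁻³⁰·logb2 n
      have hTn : Real.logb 2 (n:ℝ) - 8 ≤ (T:ℝ)+1 := by linarith
      have hq1r : (q:ℝ) = 1 := by rw [hq1']; norm_num
      rw [hq1r, one_mul] at hnov
      have hz99 : (z:ℝ) ≤ 99 := by exact_mod_cast (by omega : z ≤ 99)
      nlinarith
    · -- large z
      push_neg at hz100
      have hq100 : 100*q ≤ z := by omega
      have hq_le : (q:ℝ) ≤ (z:ℝ)/100 := by
        have : ((100*q : ℕ):ℝ) ≤ (z:ℝ) := by exact_mod_cast hq100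
        push_cast at this
        linarith
      have hp_nonneg : (0:ℝ) ≤ ((2*m+3:ℕ):ℝ) := by positivity
      -- n ≤ 4 z Lσ (k/14)
      have e2 : (q:ℝ)*((2*m+3:ℕ):ℝ) ≤ ((z:ℝ)/100)*(7*Real.logb σ z) := by
        apply mul_le_mul hq_le hp7 hp_nonneg (by positivity)
      have e4 : ((q:ℝ)*((2*m+3:ℕ):ℝ))*(k:ℝ) ≤ (((z:ℝ)/100)*(7*Real.logb σ z))*(28*((k/14:ℕ):ℝ)) := by
        apply mul_le_mul e2 hk28 (by positivity) (by positivity)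
      have f2 : (n:ℝ) ≤ 4*((z:ℝ)*Real.logb σ z)*((k/14:ℕ):ℝ) := by nlinarith
      have f3 : Real.logb 2 ((n:ℝ)/(4*((z:ℝ)*Real.logb σ z))) ≤ Real.logb 2 ((k/14:ℕ):ℝ) := by
        apply Real.logb_le_logb_of_le one_lt_two (by positivity)
        rw [div_le_iff₀ (by positivity)]
        nlinarith
      have hsplit : Real.logb 2 ((n:ℝ)/(4*((z:ℝ)*Real.logb σ z)))
          = Real.logb 2 ((n:ℝ)/((z:ℝ)*Real.logb σ z)) - 2 := by
        have e5 : (n:ℝ)/(4*((z:ℝ)*Real.logb σ z)) = ((n:ℝ)/((z:ℝ)*Real.logb σ z))/4 := by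
          rw [div_div, mul_comm]
        rw [e5, Real.logb_div (by positivity) (by norm_num)]
        have h4 : Real.logb 2 (4:ℝ) = 2 := by
          rw [show (4:ℝ) = 2^(2:ℕ) by norm_num, Real.logb_pow,
            Real.logb_self_eq_one one_lt_two]
          norm_num
        rw [h4]
      have f5 : Real.logb 2 ((n:ℝ)/((z:ℝ)*Real.logb σ z)) - 2 ≤ (T:ℝ)+1 := by
        rw [← hsplit]
        linarith
      have f6 : Real.logb 2 ((n:ℝ)/((z:ℝ)*Real.logb σ z)) / 3 ≤ (T:ℝ)+1 := by
        by_cases hL3 : Real.logb 2 ((n:ℝ)/((z:ℝ)*Real.logb σ z)) ≤ 3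
        · linarith
        · push_neg at hL3
          linarith
      have h2 : (z:ℝ) ≤ 200*(q:ℝ) := by exact_mod_cast hq200
      nlinarith [mul_le_mul h2 f6 (by positivity)
        (by positivity : (0:ℝ) ≤ 200*(q:ℝ))]

end ZNLaux
/-- There are constants `c₁, c₂, c₃ > 0` such that for all integers `n > 1`,
`2 ≤ σ ≤ n` and `σ ≤ z ≤ n / log_σ n`, there is a string `s` of length `n` over an alphabet
of size `σ` with `c₁·z ≤ Zov ≤ c₂·z` and `Znon ≥ c₃ · z · log₂(n / (z · log_σ z))`. -/
theorem exists_string_zNov_large :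
    ∃ c₁ c₂ c₃ : ℝ, 0 < c₁ ∧ 0 < c₂ ∧ 0 < c₃ ∧
      ∀ n σ z : ℕ, 1 < n → 2 ≤ σ → σ ≤ n → σ ≤ z →
        (z : ℝ) ≤ (n : ℝ) / Real.logb (σ : ℝ) (n : ℝ) →
        ∃ s : List (Fin σ), s.length = n ∧
          c₁ * (z : ℝ) ≤ (zOv s : ℝ) ∧ (zOv s : ℝ) ≤ c₂ * (z : ℝ) ∧
          c₃ * (z : ℝ) * Real.logb 2 ((n : ℝ) / ((z : ℝ) * Real.logb (σ : ℝ) (z : ℝ)))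
            ≤ (zNov s : ℝ) := by
  refine ⟨((2:ℝ)^30)⁻¹, 2^22, ((2:ℝ)^30)⁻¹, by norm_num, by norm_num, by norm_num, ?_⟩
  intro n σ z hn1 hσ2 hσn hσz hz
  have hσr : (1:ℝ) < (σ:ℝ) := by exact_mod_cast (by omega : 1 < σ)
  have hnr : (1:ℝ) < (n:ℝ) := by exact_mod_cast hn1
  have hz0 : (0:ℝ) < (z:ℝ) := by exact_mod_cast (by omega : 0 < z)
  have hlogσn_pos : 0 < Real.logb σ n := Real.logb_pos hσr hnr
  have hzlog : (z:ℝ) * Real.logb σ n ≤ (n:ℝ) := (le_div_iff₀ hlogσn_pos).mp hz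
  have hlogσn1 : 1 ≤ Real.logb σ n := ZNLaux.logb_ge_one hσ2 hσn
  have hzn : z ≤ n := by
    have h1 : (z:ℝ) ≤ (n:ℝ) := by nlinarith
    exact_mod_cast h1
  have hLσz_le : Real.logb σ z ≤ Real.logb σ n :=
    Real.logb_le_logb_of_le hσr hz0 (by exact_mod_cast hzn)
  have hzL : (z:ℝ) * Real.logb σ z ≤ (n:ℝ) := by nlinarith
  by_cases hsmall : n ≤ 2^22
  · exact ZNLaux.fallback hσ2 hn1 hσz hzn hsmall
  · exact ZNLaux.main_case hσ2 hσz hzn (by omega) hzL
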